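/- Let p : 𝔻 → ℂ be holomorphic with Re p(ζ) ≥ 0 for all ζ ∈ 𝔻 and suppose p is not identically zero near a point where it is needed; then for any ζ, ζ₀ ∈ 𝔻 with |ζ| ≤ r < 1 one has |p(ζ)| ≤ √2 · |p(ζ₀)| · (|1 − conj(ζ₀)·ζ| + |ζ₀ − ζ|)² / ((1 − |ζ₀|²)(1 − |ζ|²)). In particular |p(ζ)| ≤ 16√2 · |p(ζ₀)| / ((1 − |ζ₀|²)(1 − r²)). -/

import Mathlib

open Complex Set Metric

/-- Growth estimate for holomorphic functions with nonnegative real part on the unit disk: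
`|p(ζ)| ≤ √2 |p(ζ₀)| (|1 − conj(ζ₀)ζ| + |ζ₀ − ζ|)² / ((1 − |ζ₀|²)(1 − |ζ|²))`,
and in particular `|p(ζ)| ≤ 16√2 |p(ζ₀)| / ((1 − |ζ₀|²)(1 − r²))` for `|ζ| ≤ r`. -/
-- Möbius facts
lemma carath_moeb_den (a w : ℂ) (ha : ‖a‖ < 1) (hw : ‖w‖ < 1) :
    1 - (starRingEnd ℂ) a * w ≠ 0 := by
  intro h
  have h1 : ‖(starRingEnd ℂ) a * w‖ < 1 := by
    rw [norm_mul, RCLike.norm_conj]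
    calc ‖a‖ * ‖w‖ ≤ ‖a‖ * 1 := by
          exact mul_le_mul_of_nonneg_left hw.le (norm_nonneg _)
      _ = ‖a‖ := mul_one _
      _ < 1 := ha
  have h2 : (starRingEnd ℂ) a * w = 1 := by linear_combination -h
  rw [h2] at h1
  simp at h1

lemma carath_key_id (a b : ℂ) :
    ‖1 - (starRingEnd ℂ) a * b‖ ^ 2 - ‖a - b‖ ^ 2 = (1 - ‖a‖ ^ 2) * (1 - ‖b‖ ^ 2) := by
  simp only [Complex.sq_norm, Complex.normSq_apply, Complex.sub_re,
    Complex.sub_im, Complex.mul_re, Complex.mul_im, Complex.one_re, Complex.one_im,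
    Complex.conj_re, Complex.conj_im]
  ring

lemma carath_key_id2 (a b : ℂ) :
    Complex.normSq (a + (starRingEnd ℂ) b) - Complex.normSq (a - b) = 4 * a.re * b.re := by
  simp only [Complex.normSq_apply, Complex.add_re, Complex.add_im, Complex.sub_re,
    Complex.sub_im, Complex.conj_re, Complex.conj_im]
  ring

lemma carath_moeb_norm_lt (a w : ℂ) (ha : ‖a‖ < 1) (hw : ‖w‖ < 1) :
    ‖(a - w) / (1 - (starRingEnd ℂ) a * w)‖ < 1 := by
  have hden := carath_moeb_den a w ha hw
  have hdpos : 0 < ‖1 - (starRingEnd ℂ) a * w‖ := norm_pos_iff.2 hden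
  rw [norm_div, div_lt_one hdpos]
  have hid := carath_key_id a w
  have ha2 : 0 < 1 - ‖a‖ ^ 2 := by nlinarith [norm_nonneg a]
  have hw2 : 0 < 1 - ‖w‖ ^ 2 := by nlinarith [norm_nonneg w]
  have h1 : 0 < (1 - ‖a‖ ^ 2) * (1 - ‖w‖ ^ 2) := mul_pos ha2 hw2
  nlinarith [norm_nonneg (a - w), norm_nonneg (1 - (starRingEnd ℂ) a * w)]

lemma carath_moeb_invol (a w : ℂ) (ha : ‖a‖ < 1) (hw : ‖w‖ < 1) :
    (a - (a - w) / (1 - (starRingEnd ℂ) a * w)) /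
      (1 - (starRingEnd ℂ) a * ((a - w) / (1 - (starRingEnd ℂ) a * w))) = w := by
  have hden := carath_moeb_den a w ha hw
  have h2 : ‖(a - w) / (1 - (starRingEnd ℂ) a * w)‖ < 1 := carath_moeb_norm_lt a w ha hw
  have hden2 := carath_moeb_den a _ ha h2
  field_simp at hden2 ⊢
  rw [div_eq_iff (by intro h0; apply hden2; rw [h0, zero_div])]
  ring
-- half-plane bound via Schwarz
lemma carath_halfplane (q : ℂ → ℂ) (hq : DifferentiableOn ℂ q (ball (0:ℂ) 1))
    (ε : ℝ) (hε : 0 < ε) (hqre : ∀ z ∈ ball (0:ℂ) 1, ε ≤ (q z).re)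
    (w : ℂ) (hw : w ∈ ball (0:ℂ) 1) :
    ‖q w‖ * (1 - ‖w‖) ≤ ‖q 0‖ * (1 + ‖w‖) := by
  have h0 : (0:ℂ) ∈ ball (0:ℂ) 1 := by simp
  set c := q 0 with hc
  have hcre : 0 < c.re := lt_of_lt_of_le hε (hqre 0 h0)
  have hdenpos : ∀ z ∈ ball (0:ℂ) 1, 0 < (q z + (starRingEnd ℂ) c).re := by
    intro z hz
    have h1 : ε ≤ (q z).re := hqre z hz
    simp only [Complex.add_re, Complex.conj_re]
    linarith
  have hden : ∀ z ∈ ball (0:ℂ) 1, q z + (starRingEnd ℂ) c ≠ 0 := by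
    intro z hz h
    have := hdenpos z hz
    rw [h] at this
    simp at this
  set h : ℂ → ℂ := fun z => (q z - c) / (q z + (starRingEnd ℂ) c) with hh
  have hhd : DifferentiableOn ℂ h (ball (0:ℂ) 1) :=
    (hq.sub_const c).div (hq.add_const _) hden
  have hlt : ∀ z ∈ ball (0:ℂ) 1, ‖q z - c‖ < ‖q z + (starRingEnd ℂ) c‖ := by
    intro z hz
    have hid := carath_key_id2 (q z) c
    have hre : ε ≤ (q z).re := hqre z hz
    have h1 : ‖q z - c‖ ^ 2 = Complex.normSq (q z - c) := by
      rw [Complex.sq_norm]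
    have h2 : ‖q z + (starRingEnd ℂ) c‖ ^ 2 = Complex.normSq (q z + (starRingEnd ℂ) c) := by
      rw [Complex.sq_norm]
    have hsq : ‖q z - c‖ ^ 2 < ‖q z + (starRingEnd ℂ) c‖ ^ 2 := by
      rw [h1, h2]; nlinarith
    exact lt_of_pow_lt_pow_left₀ 2 (norm_nonneg _) hsq
  have hmaps : MapsTo h (ball (0:ℂ) 1) (ball (0:ℂ) 1) := by
    intro z hz
    rw [mem_ball_zero_iff, hh]
    have hpos : 0 < ‖q z + (starRingEnd ℂ) c‖ := norm_pos_iff.2 (hden z hz)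
    rw [norm_div, div_lt_one hpos]
    exact hlt z hz
  have h00 : h 0 = 0 := by simp [hh, hc]
  have hS : ‖h w‖ ≤ ‖w‖ := by
    apply Complex.norm_le_norm_of_mapsTo_ball hhd (hmaps.mono_right ball_subset_closedBall) h00
    rwa [← mem_ball_zero_iff]
  have hS' : ‖q w - c‖ ≤ ‖w‖ * ‖q w + (starRingEnd ℂ) c‖ := by
    have hpos : 0 < ‖q w + (starRingEnd ℂ) c‖ := norm_pos_iff.2 (hden w hw)
    have : ‖q w - c‖ / ‖q w + (starRingEnd ℂ) c‖ ≤ ‖w‖ := by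
      rw [← norm_div]; exact hS
    calc ‖q w - c‖ = ‖q w - c‖ / ‖q w + (starRingEnd ℂ) c‖ * ‖q w + (starRingEnd ℂ) c‖ :=
          (div_mul_cancel₀ _ hpos.ne').symm
      _ ≤ ‖w‖ * ‖q w + (starRingEnd ℂ) c‖ := by
          exact mul_le_mul_of_nonneg_right this hpos.le
  have t1 : ‖q w‖ - ‖c‖ ≤ ‖q w - c‖ := norm_sub_norm_le _ _
  have t2 : ‖q w + (starRingEnd ℂ) c‖ ≤ ‖q w‖ + ‖c‖ := by
    calc ‖q w + (starRingEnd ℂ) c‖ ≤ ‖q w‖ + ‖(starRingEnd ℂ) c‖ := norm_add_le _ _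
      _ = ‖q w‖ + ‖c‖ := by rw [RCLike.norm_conj]
  have hw0 : 0 ≤ ‖w‖ := norm_nonneg _
  nlinarith [norm_nonneg (q w), norm_nonneg c]

set_option maxHeartbeats 1000000 in
theorem carath_class_growth_estimate
    (p : ℂ → ℂ) (hp : DifferentiableOn ℂ p (ball (0:ℂ) 1))
    (hRe : ∀ z ∈ ball (0:ℂ) 1, 0 ≤ (p z).re)
    (hnz : ¬ ∀ z ∈ ball (0:ℂ) 1, p z = 0)
    (r : ℝ) (hr : r ∈ Ioo (0:ℝ) 1)
    (ζ ζ₀ : ℂ) (hζ₀ : ζ₀ ∈ ball (0:ℂ) 1) (hζr : ‖ζ‖ ≤ r) :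
    ‖p ζ‖ ≤ Real.sqrt 2 * ‖p ζ₀‖ *
        (‖1 - (starRingEnd ℂ) ζ₀ * ζ‖ + ‖ζ₀ - ζ‖) ^ 2 /
        ((1 - ‖ζ₀‖ ^ 2) * (1 - ‖ζ‖ ^ 2)) ∧
      ‖p ζ‖ ≤ 16 * Real.sqrt 2 * ‖p ζ₀‖ / ((1 - ‖ζ₀‖ ^ 2) * (1 - r ^ 2)) := by
  have hζ1 : ‖ζ‖ < 1 := lt_of_le_of_lt hζr hr.2
  have hζball : ζ ∈ ball (0:ℂ) 1 := by rwa [mem_ball_zero_iff]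
  have ha : ‖ζ₀‖ < 1 := by rwa [mem_ball_zero_iff] at hζ₀
  set A := ‖1 - (starRingEnd ℂ) ζ₀ * ζ‖ with hA
  set B := ‖ζ₀ - ζ‖ with hB
  have hid : A ^ 2 - B ^ 2 = (1 - ‖ζ₀‖ ^ 2) * (1 - ‖ζ‖ ^ 2) := carath_key_id ζ₀ ζ
  have ha2 : 0 < 1 - ‖ζ₀‖ ^ 2 := by nlinarith [norm_nonneg ζ₀]
  have hz2 : 0 < 1 - ‖ζ‖ ^ 2 := by nlinarith [norm_nonneg ζ]
  have hD : 0 < (1 - ‖ζ₀‖ ^ 2) * (1 - ‖ζ‖ ^ 2) := mul_pos ha2 hz2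
  have hBnn : 0 ≤ B := norm_nonneg _
  have hBA : B < A := by
    by_contra hcon
    push_neg at hcon
    have h2 : A ^ 2 ≤ B ^ 2 := pow_le_pow_left₀ (norm_nonneg _) hcon 2
    linarith
  have hApos : 0 < A := lt_of_le_of_lt hBnn hBA
  set φ : ℂ → ℂ := fun w => (ζ₀ - w) / (1 - (starRingEnd ℂ) ζ₀ * w) with hφ
  set w₁ : ℂ := (ζ₀ - ζ) / (1 - (starRingEnd ℂ) ζ₀ * ζ) with hw₁
  have hw₁norm : ‖w₁‖ = B / A := by rw [hw₁, norm_div]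
  have hw₁lt : ‖w₁‖ < 1 := carath_moeb_norm_lt ζ₀ ζ ha hζ1
  have hφw₁ : φ w₁ = ζ := carath_moeb_invol ζ₀ ζ ha hζ1
  have hφ0 : φ 0 = ζ₀ := by simp [hφ]
  have hφmaps : MapsTo φ (ball (0:ℂ) 1) (ball (0:ℂ) 1) := by
    intro w hw
    rw [mem_ball_zero_iff] at hw ⊢
    exact carath_moeb_norm_lt ζ₀ w ha hw
  have hφdiff : DifferentiableOn ℂ φ (ball (0:ℂ) 1) := by
    apply DifferentiableOn.div
    · exact (differentiableOn_const _).sub differentiableOn_id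
    · exact (differentiableOn_const _).sub ((differentiableOn_const _).mul differentiableOn_id)
    · intro w hw
      rw [mem_ball_zero_iff] at hw
      exact carath_moeb_den ζ₀ w ha hw
  -- key inequality, via ε-shift and limit
  have key : ‖p ζ‖ * (A - B) ≤ ‖p ζ₀‖ * (A + B) := by
    have hev : ∀ ε ∈ Ioi (0:ℝ),
        ‖p ζ + (ε:ℂ)‖ * (A - B) ≤ ‖p ζ₀ + (ε:ℂ)‖ * (A + B) := by
      intro ε hε
      rw [mem_Ioi] at hε
      set q : ℂ → ℂ := fun w => p (φ w) + (ε:ℂ) with hq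
      have hqd : DifferentiableOn ℂ q (ball (0:ℂ) 1) :=
        (hp.comp hφdiff hφmaps).add_const _
      have hqre : ∀ z ∈ ball (0:ℂ) 1, ε ≤ (q z).re := by
        intro z hz
        have := hRe (φ z) (hφmaps hz)
        simp only [hq, Complex.add_re, Complex.ofReal_re]
        linarith
      have hh := carath_halfplane q hqd ε hε hqre w₁ (mem_ball_zero_iff.2 hw₁lt)
      have e1 : q w₁ = p ζ + (ε:ℂ) := by rw [hq]; simp only [hφw₁]
      have e2 : q 0 = p ζ₀ + (ε:ℂ) := by rw [hq]; simp only [hφ0]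
      rw [e1, e2, hw₁norm] at hh
      have hAne : A ≠ 0 := hApos.ne'
      have h3 : ‖p ζ + (ε:ℂ)‖ * (A - B) = ‖p ζ + (ε:ℂ)‖ * (1 - B / A) * A := by
        field_simp
      have h4 : ‖p ζ₀ + (ε:ℂ)‖ * (A + B) = ‖p ζ₀ + (ε:ℂ)‖ * (1 + B / A) * A := by
        field_simp
      rw [h3, h4]
      exact mul_le_mul_of_nonneg_right hh hApos.le
    have l1 : Filter.Tendsto (fun ε : ℝ => ‖p ζ + (ε:ℂ)‖ * (A - B))
        (nhdsWithin 0 (Ioi 0)) (nhds (‖p ζ‖ * (A - B))) := by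
      have hc : Continuous fun ε : ℝ => ‖p ζ + (ε:ℂ)‖ * (A - B) :=
        ((continuous_const.add Complex.continuous_ofReal).norm).mul continuous_const
      have := hc.tendsto 0
      simp only [Complex.ofReal_zero, add_zero] at this
      exact this.mono_left nhdsWithin_le_nhds
    have l2 : Filter.Tendsto (fun ε : ℝ => ‖p ζ₀ + (ε:ℂ)‖ * (A + B))
        (nhdsWithin 0 (Ioi 0)) (nhds (‖p ζ₀‖ * (A + B))) := by
      have hc : Continuous fun ε : ℝ => ‖p ζ₀ + (ε:ℂ)‖ * (A + B) :=
        ((continuous_const.add Complex.continuous_ofReal).norm).mul continuous_const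
      have := hc.tendsto 0
      simp only [Complex.ofReal_zero, add_zero] at this
      exact this.mono_left nhdsWithin_le_nhds
    exact le_of_tendsto_of_tendsto l1 l2 (Filter.eventually_of_mem self_mem_nhdsWithin hev)
  have hsqrt2 : (1:ℝ) ≤ Real.sqrt 2 := by
    rw [show (1:ℝ) = Real.sqrt 1 by simp]
    exact Real.sqrt_le_sqrt (by norm_num)
  have hp0 : (0:ℝ) ≤ ‖p ζ₀‖ := norm_nonneg _
  have g1 : ‖p ζ‖ ≤ Real.sqrt 2 * ‖p ζ₀‖ * (A + B) ^ 2 /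
      ((1 - ‖ζ₀‖ ^ 2) * (1 - ‖ζ‖ ^ 2)) := by
    rw [le_div_iff₀ hD]
    have hk2 := mul_le_mul_of_nonneg_right key (show (0:ℝ) ≤ A + B by positivity)
    have hDprod : ‖p ζ‖ * ((1 - ‖ζ₀‖ ^ 2) * (1 - ‖ζ‖ ^ 2)) = ‖p ζ‖ * (A - B) * (A + B) := by
      rw [← hid]; ring
    have hslack : 0 ≤ (Real.sqrt 2 - 1) * (‖p ζ₀‖ * (A + B) ^ 2) :=
      mul_nonneg (sub_nonneg.2 hsqrt2) (mul_nonneg hp0 (sq_nonneg _))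
    nlinarith [hk2]
  refine ⟨g1, le_trans g1 ?_⟩
  have hA2 : A ≤ 2 := by
    calc A ≤ ‖(1:ℂ)‖ + ‖(starRingEnd ℂ) ζ₀ * ζ‖ := norm_sub_le _ _
      _ ≤ 1 + 1 := by
          rw [norm_one, norm_mul, RCLike.norm_conj]
          have : ‖ζ₀‖ * ‖ζ‖ ≤ 1 * 1 :=
            mul_le_mul ha.le hζ1.le (norm_nonneg _) zero_le_one
          linarith
      _ = 2 := by norm_num
  have hB2 : B ≤ 2 := by
    calc B ≤ ‖ζ₀‖ + ‖ζ‖ := norm_sub_le _ _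
      _ ≤ 2 := by linarith [ha.le, hζ1.le]
  have hr2 : 0 < (1 - ‖ζ₀‖ ^ 2) * (1 - r ^ 2) := by
    apply mul_pos ha2
    nlinarith [hr.1, hr.2]
  apply div_le_div₀ (by positivity) ?_ hr2 ?_
  · have h16 : (A + B) ^ 2 ≤ 16 := by
      have hs : A + B ≤ 4 := by linarith
      calc (A + B) ^ 2 ≤ 4 ^ 2 := pow_le_pow_left₀ (by linarith) hs 2
        _ = 16 := by norm_num
    have := mul_le_mul_of_nonneg_left h16 (mul_nonneg (Real.sqrt_nonneg 2) hp0)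
    nlinarith [this]
  · have : ‖ζ‖ ^ 2 ≤ r ^ 2 := by nlinarith [norm_nonneg ζ]
    have h1r : 1 - r ^ 2 ≤ 1 - ‖ζ‖ ^ 2 := by linarith
    exact mul_le_mul_of_nonneg_left h1r ha2.le
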